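/- Suppose J is continuous, bounded, nonnegative, and supported in [0, K_*]. Then there exist constants L₀ > 0 and C > 0 such that for all r ≥ L₀ and ρ ∈ [r - K_*, r + K_*], |J̃(r,ρ) - J_*(r-ρ)| ≤ C r^{-1}. -/

import Mathlib

open MeasureTheory

/-- Surface area of the unit sphere in `ℝ^k`, i.e. `k` times the volume of the unit ball. -/
noncomputable def unitSphereArea (k : ℕ) : ℝ :=
  (k : ℝ) * (volume (Metric.ball (0 : EuclideanSpace ℝ (Fin k)) 1)).toReal

open Set

lemma rpow_near_one (q : ℝ) : ∃ A : ℝ, 0 < A ∧ ∀ x : ℝ, |x| ≤ 1/2 →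
    |(1 + x) ^ q - 1| ≤ A * |x| := by
  refine ⟨|q| * 2 ^ |q - 1| + 1, by positivity, fun x hx => ?_⟩
  have hx1 : (1/2 : ℝ) ≤ 1 + x := by
    have := abs_le.1 hx; linarith [this.1]
  have hx2 : 1 + x ≤ 3/2 := by
    have := abs_le.1 hx; linarith [this.2]
  have hmem : (1 + x) ∈ Icc (1/2 : ℝ) (3/2) := ⟨hx1, hx2⟩
  have hone : (1 : ℝ) ∈ Icc (1/2 : ℝ) (3/2) := by norm_num
  have hder : ∀ y ∈ Icc (1/2 : ℝ) (3/2),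
      HasDerivWithinAt (fun z : ℝ => z ^ q) (q * y ^ (q - 1)) (Icc (1/2 : ℝ) (3/2)) y := by
    intro y hy
    exact (Real.hasDerivAt_rpow_const (Or.inl (by linarith [hy.1]))).hasDerivWithinAt
  have hbound : ∀ y ∈ Icc (1/2 : ℝ) (3/2), ‖q * y ^ (q - 1)‖ ≤ |q| * 2 ^ |q - 1| := by
    intro y hy
    have hy0 : (0:ℝ) < y := by linarith [hy.1]
    rw [Real.norm_eq_abs, abs_mul]
    gcongr
    rw [abs_of_nonneg (Real.rpow_nonneg hy0.le _)]
    rcases le_or_gt 0 (q - 1) with h | h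
    · calc y ^ (q - 1) ≤ (2:ℝ) ^ (q - 1) := Real.rpow_le_rpow hy0.le (by linarith [hy.2]) h
        _ = (2:ℝ) ^ |q - 1| := by rw [abs_of_nonneg h]
    · calc y ^ (q - 1) ≤ (1/2 : ℝ) ^ (q - 1) :=
          Real.rpow_le_rpow_of_nonpos (by norm_num) hy.1 h.le
        _ = (2:ℝ) ^ |q - 1| := by
          rw [abs_of_neg h, one_div, ← Real.rpow_neg_one, ← Real.rpow_mul (by norm_num : (0:ℝ) ≤ 2), neg_one_mul]
  have := (convex_Icc (1/2 : ℝ) (3/2)).norm_image_sub_le_of_norm_hasDerivWithin_le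
    hder hbound hone hmem
  rw [Real.one_rpow] at this
  simp only [Real.norm_eq_abs, add_sub_cancel_left] at this
  calc |(1 + x) ^ q - 1| ≤ |q| * 2 ^ |q - 1| * |x| := this
    _ ≤ (|q| * 2 ^ |q - 1| + 1) * |x| := by
        have := abs_nonneg x; nlinarith [abs_nonneg x]

lemma weight_integral (p b K : ℝ) (hp : 0 < p + 1) (hb : 0 ≤ b) (hbK : b ≤ K) :
    IntegrableOn (fun η => η * (η ^ 2 - b ^ 2) ^ p) (Ioo b K) volume ∧
    ∫ η in Ioo b K, η * (η ^ 2 - b ^ 2) ^ p = (K ^ 2 - b ^ 2) ^ (p + 1) / (2 * (p + 1)) := by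
  set G : ℝ → ℝ := fun η => (η ^ 2 - b ^ 2) ^ (p + 1) / (2 * (p + 1)) with hG
  have hcont : ContinuousOn G (Icc b K) := by
    apply ContinuousOn.div_const
    exact ((Real.continuous_rpow_const hp.le).comp (by continuity)).continuousOn
  have hderiv : ∀ η ∈ Ioo b K, HasDerivAt G (η * (η ^ 2 - b ^ 2) ^ p) η := by
    intro η hη
    have hpos : 0 < η ^ 2 - b ^ 2 := by
      have h1 : b < η := hη.1
      nlinarith
    have h1 : HasDerivAt (fun η : ℝ => η ^ 2 - b ^ 2) (2 * η) η := by
      simpa using (hasDerivAt_pow 2 η).sub_const (b ^ 2)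
    have h2 := (h1.rpow_const (p := p + 1) (Or.inl hpos.ne')).div_const (2 * (p + 1))
    refine h2.congr_deriv ?_
    have hp1 : p + 1 ≠ 0 := hp.ne'
    rw [add_sub_cancel_right]
    field_simp
  have hpos' : ∀ η ∈ Ioo b K, 0 ≤ η * (η ^ 2 - b ^ 2) ^ p := by
    intro η hη
    have h0 : (0:ℝ) ≤ η := le_trans hb hη.1.le
    have h1 : (0:ℝ) ≤ η ^ 2 - b ^ 2 := by nlinarith [hη.1]
    exact mul_nonneg h0 (Real.rpow_nonneg h1 p)
  have hint : IntegrableOn (fun η => η * (η ^ 2 - b ^ 2) ^ p) (Ioc b K) volume :=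
    intervalIntegral.integrableOn_deriv_of_nonneg hcont hderiv hpos'
  refine ⟨hint.mono_set Ioo_subset_Ioc_self, ?_⟩
  have hval := intervalIntegral.integral_eq_sub_of_hasDeriv_right_of_le hbK hcont
    (fun x hx => (hderiv x hx).hasDerivWithinAt)
    ((intervalIntegrable_iff_integrableOn_Ioc_of_le hbK).mpr hint)
  rw [intervalIntegral.integral_of_le hbK, integral_Ioc_eq_integral_Ioo] at hval
  rw [hval, hG]
  simp [Real.zero_rpow hp.ne']

lemma ae_ne_real (K : ℝ) : ∀ᵐ η : ℝ, η ≠ K := by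
  refine ae_iff.mpr ?_
  simp only [not_not]
  convert Real.volume_singleton (a := K) using 2
  rfl

lemma trunc_Ioo (f : ℝ → ℝ) (b K a : ℝ) (hK : K ≤ a) (hf : ∀ η, K < η → f η = 0) :
    ∫ η in Ioo b a, f η = ∫ η in Ioo b K, f η := by
  rw [← integral_indicator measurableSet_Ioo, ← integral_indicator measurableSet_Ioo]
  apply integral_congr_ae
  filter_upwards [ae_ne_real K] with η hη
  by_cases h : η ∈ Ioo b K
  · rw [Set.indicator_of_mem h, Set.indicator_of_mem (show η ∈ Ioo b a from ⟨h.1, lt_of_lt_of_le h.2 hK⟩)]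
  · rw [Set.indicator_of_notMem h]
    by_cases h2 : η ∈ Ioo b a
    · rw [Set.indicator_of_mem h2]
      have hKη : K < η := by
        rcases lt_or_ge K η with h3 | h3
        · exact h3
        · exact absurd ⟨h2.1, lt_of_le_of_ne h3 hη⟩ h
      exact hf η hKη
    · rw [Set.indicator_of_notMem h2]

lemma trunc_Ioi (f : ℝ → ℝ) (b K : ℝ) (hf : ∀ η, K < η → f η = 0) :
    ∫ η in Ioi b, f η = ∫ η in Ioo b K, f η := by
  rw [← integral_indicator measurableSet_Ioi, ← integral_indicator measurableSet_Ioo]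
  apply integral_congr_ae
  filter_upwards [ae_ne_real K] with η hη
  by_cases h : η ∈ Ioo b K
  · rw [Set.indicator_of_mem h, Set.indicator_of_mem (show η ∈ Ioi b from h.1)]
  · rw [Set.indicator_of_notMem h]
    by_cases h2 : η ∈ Ioi b
    · rw [Set.indicator_of_mem h2]
      have hKη : K < η := by
        rcases lt_or_ge K η with h3 | h3
        · exact h3
        · exact absurd ⟨h2, lt_of_le_of_ne h3 hη⟩ h
      exact hf η hKη
    · rw [Set.indicator_of_notMem h2]

lemma key_id (N : ℕ) (hN : 2 ≤ N) (r ρ η : ℝ) (hr : 0 < r)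
    (hX : 0 < (ρ + r) ^ 2 - η ^ 2) :
    (2:ℝ) ^ ((3:ℝ) - (N:ℝ)) * (ρ / r ^ (N - 2)) *
      ((ρ + r) ^ 2 - η ^ 2) ^ (((N:ℝ) - 3) / 2)
    = (ρ / r) * (((ρ + r) ^ 2 - η ^ 2) / (4 * r ^ 2)) ^ (((N:ℝ) - 3) / 2) := by
  set p : ℝ := ((N:ℝ) - 3) / 2 with hp
  set X : ℝ := (ρ + r) ^ 2 - η ^ 2 with hXdef
  have hr2 : (0:ℝ) < 4 * r ^ 2 := by positivity
  have e1 : (X / (4 * r ^ 2)) ^ p = X ^ p / (4 * r ^ 2) ^ p :=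
    Real.div_rpow hX.le hr2.le p
  have e2 : ((4:ℝ) * r ^ 2) ^ p = 2 ^ ((N:ℝ) - 3) * r ^ ((N:ℝ) - 3) := by
    have h4 : (4:ℝ) * r ^ 2 = (2 * r) ^ (2:ℕ) := by ring
    rw [h4, ← Real.rpow_natCast (2 * r) 2, ← Real.rpow_mul (by positivity)]
    rw [Real.mul_rpow (by norm_num) hr.le]
    norm_num [hp]
    ring_nf
  have e3 : (r : ℝ) ^ ((N - 2 : ℕ)) = r ^ ((N:ℝ) - 3) * r := by
    rw [← Real.rpow_natCast r (N - 2)]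
    rw [show ((N - 2 : ℕ) : ℝ) = (N:ℝ) - 2 by
      push_cast [Nat.cast_sub hN]; ring]
    rw [← Real.rpow_add_one hr.ne' ((N:ℝ) - 3)]
    ring_nf
  have h2N : (0:ℝ) < 2 ^ ((N:ℝ) - 3) := Real.rpow_pos_of_pos (by norm_num) _
  have hrN : (0:ℝ) < r ^ ((N:ℝ) - 3) := Real.rpow_pos_of_pos hr _
  have e4 : (2:ℝ) ^ ((3:ℝ) - (N:ℝ)) * 2 ^ ((N:ℝ) - 3) = 1 := by
    rw [← Real.rpow_add (by norm_num : (0:ℝ) < 2)]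
    norm_num
  rw [e1, e2, e3]
  field_simp
  linear_combination ρ * e4

set_option maxHeartbeats 1000000 in
/-- If `J` is continuous, bounded, nonnegative and supported in `[0, K_*]`, then there exist
`L₀ > 0` and `C > 0` such that `|J̃(r,ρ) - J_*(r-ρ)| ≤ C/r` for `r ≥ L₀` and
`ρ ∈ [r - K_*, r + K_*]`. -/
theorem stmt5 (N : ℕ) (hN : 2 ≤ N) (J : ℝ → ℝ)
    (hJc : Continuous J) (hJb : ∃ M, ∀ η, |J η| ≤ M) (hJnn : ∀ η, 0 ≤ J η)
    (Kstar : ℝ) (hK : 0 < Kstar) (hsupp : ∀ η, Kstar < η → J η = 0)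
    (Jt : ℝ → ℝ → ℝ) (Jstar : ℝ → ℝ)
    (hJt : ∀ r ρ : ℝ, 0 < r → 0 < ρ → Jt r ρ =
      unitSphereArea (N - 1) * (2:ℝ) ^ ((3:ℝ) - (N:ℝ)) * (ρ / r ^ (N - 2)) *
        ∫ η in Set.Ioo |ρ - r| (ρ + r),
          (((ρ + r) ^ 2 - η ^ 2) * (η ^ 2 - (ρ - r) ^ 2)) ^ (((N:ℝ) - 3) / 2) * (η * J η))
    (hJs : ∀ l : ℝ, Jstar l =
      unitSphereArea (N - 1) *
        ∫ η in Set.Ioi |l|, J η * η * (η ^ 2 - l ^ 2) ^ (((N:ℝ) - 3) / 2)) :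
    ∃ L₀ > (0:ℝ), ∃ C > (0:ℝ), ∀ r : ℝ, L₀ ≤ r →
      ∀ ρ ∈ Set.Icc (r - Kstar) (r + Kstar), |Jt r ρ - Jstar (r - ρ)| ≤ C / r := by
  obtain ⟨M₀, hM₀⟩ := hJb
  set M : ℝ := max M₀ 1 with hMdef
  have hM : ∀ η, |J η| ≤ M := fun η => (hM₀ η).trans (le_max_left _ _)
  have hM1 : (1:ℝ) ≤ M := le_max_right _ _
  have hM0 : (0:ℝ) < M := lt_of_lt_of_le one_pos hM1
  set p : ℝ := ((N:ℝ) - 3) / 2 with hp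
  have hNR : (2:ℝ) ≤ (N:ℝ) := by exact_mod_cast hN
  have hq : 0 < p + 1 := by rw [hp]; linarith
  obtain ⟨A, hA0, hAle⟩ := rpow_near_one p
  set c : ℝ := Kstar + Kstar ^ 2 with hc
  have hc0 : 0 < c := by positivity
  have hKc : Kstar ≤ c := by rw [hc]; linarith [sq_nonneg Kstar]
  set ω : ℝ := unitSphereArea (N - 1) with hω
  have hω0 : 0 ≤ ω :=
    mul_nonneg (Nat.cast_nonneg _) ENNReal.toReal_nonneg
  set C₁ : ℝ := c * (1 + A) + A * c with hC₁
  have hC₁0 : 0 < C₁ := by positivity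
  set C : ℝ := ω * (C₁ * M * ((Kstar ^ 2) ^ (p + 1) / (2 * (p + 1)))) + 1 with hCdef
  have hC0 : 0 < C := by
    have h1 : 0 ≤ (Kstar ^ 2) ^ (p + 1) := Real.rpow_nonneg (by positivity) _
    have h2 : 0 ≤ ω * (C₁ * M * ((Kstar ^ 2) ^ (p + 1) / (2 * (p + 1)))) := by
      apply mul_nonneg hω0
      apply mul_nonneg (mul_nonneg hC₁0.le hM0.le)
      positivity
    rw [hCdef]
    linarith [h2]
  refine ⟨4 * c + 1, by positivity, C, hC0, fun r hr ρ hρ => ?_⟩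
  obtain ⟨hρ1, hρ2⟩ := hρ
  have hr1 : (1:ℝ) ≤ r := by linarith
  have hr0 : (0:ℝ) < r := by linarith
  have hρ0 : 0 < ρ := by linarith
  set b : ℝ := |ρ - r| with hb
  have hts : |ρ - r| ≤ Kstar := abs_le.mpr ⟨by linarith, by linarith⟩
  have h2 := abs_le.1 hts
  have hb0 : 0 ≤ b := abs_nonneg _
  have hbK : b ≤ Kstar := hts
  set a : ℝ := ρ + r with ha
  have haK : Kstar < a := by rw [ha]; linarith
  have ha0 : 0 < a := lt_trans hK haK
  have esq1 : (ρ - r) ^ 2 = b ^ 2 := (sq_abs _).symm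
  have esq2 : (r - ρ) ^ 2 = b ^ 2 := by rw [← esq1]; ring
  have habs : |r - ρ| = b := abs_sub_comm r ρ
  obtain ⟨hwInt, hwVal⟩ := weight_integral p b Kstar hq hb0 hbK
  -- reduce `Jstar` to an integral over `Ioo b Kstar`
  have hsupp2 : ∀ η, Kstar < η → J η * η * (η ^ 2 - b ^ 2) ^ p = 0 := fun η hη => by
    rw [hsupp η hη]; ring
  have hIs : Jstar (r - ρ) = ω * ∫ η in Set.Ioo b Kstar,
      J η * η * (η ^ 2 - b ^ 2) ^ p := by
    rw [hJs (r - ρ), habs]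
    simp only [esq2]
    rw [trunc_Ioi (fun η => J η * η * (η ^ 2 - b ^ 2) ^ p) b Kstar hsupp2]
  -- reduce `Jt` to an integral over `Ioo b Kstar`
  have hsupp3 : ∀ η, Kstar < η →
      ((a ^ 2 - η ^ 2) * (η ^ 2 - b ^ 2)) ^ p * (η * J η) = 0 := fun η hη => by
    rw [hsupp η hη]; ring
  have hIt : Jt r ρ = ω * ((2:ℝ) ^ ((3:ℝ) - (N:ℝ)) * (ρ / r ^ (N - 2)) *
      ∫ η in Set.Ioo b Kstar, ((a ^ 2 - η ^ 2) * (η ^ 2 - b ^ 2)) ^ p * (η * J η)) := by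
    rw [hJt r ρ hr0 hρ0, ← hb, ← ha]
    simp only [esq1]
    rw [trunc_Ioo (fun η => ((a ^ 2 - η ^ 2) * (η ^ 2 - b ^ 2)) ^ p * (η * J η))
      b Kstar a haK.le hsupp3]
    ring
  set κ : ℝ := (2:ℝ) ^ ((3:ℝ) - (N:ℝ)) * (ρ / r ^ (N - 2)) with hκ
  -- the key pointwise estimate
  have hkey : ∀ η ∈ Set.Ioo b Kstar, |κ * (a ^ 2 - η ^ 2) ^ p - 1| ≤ C₁ / r := by
    intro η hη
    have hηb : b < η := hη.1
    have hη0 : 0 < η := lt_of_le_of_lt hb0 hηb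
    have hηK : η < Kstar := hη.2
    have hX : 0 < a ^ 2 - η ^ 2 := by
      have h5 : (0:ℝ) < (a - η) * (a + η) := mul_pos (by linarith) (by linarith)
      linarith [h5]
    set y : ℝ := (a ^ 2 - η ^ 2) / (4 * r ^ 2) - 1 with hy
    have h1y : 1 + y = (a ^ 2 - η ^ 2) / (4 * r ^ 2) := by rw [hy]; ring
    have hyabs : |y| ≤ c / r := by
      have e : y = (4 * r * (ρ - r) + (ρ - r) ^ 2 - η ^ 2) / (4 * r ^ 2) := by
        rw [hy, ha]; field_simp; ring
      rw [e, abs_div, abs_of_pos (show (0:ℝ) < 4 * r ^ 2 by positivity),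
        div_le_div_iff₀ (by positivity) hr0]
      have hnum : |4 * r * (ρ - r) + (ρ - r) ^ 2 - η ^ 2| ≤ 4 * r * c := by
        have hsq : (ρ - r) ^ 2 ≤ Kstar ^ 2 := sq_le_sq' h2.1 h2.2
        have hsqη : η ^ 2 ≤ Kstar ^ 2 := by
          have h6 : (0:ℝ) ≤ (Kstar - η) * (Kstar + η) :=
            mul_nonneg (by linarith) (by linarith)
          linarith [h6]
        have hp1 : 4 * r * (ρ - r) ≤ 4 * r * Kstar :=
          mul_le_mul_of_nonneg_left h2.2 (by linarith)
        have hp2 : 4 * r * (-Kstar) ≤ 4 * r * (ρ - r) :=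
          mul_le_mul_of_nonneg_left h2.1 (by linarith)
        have hp3 : Kstar ^ 2 ≤ 4 * r * Kstar ^ 2 := by
          have h6 : (0:ℝ) ≤ (4 * r - 1) * Kstar ^ 2 :=
            mul_nonneg (by linarith) (sq_nonneg Kstar)
          linarith [h6]
        rw [abs_le]
        constructor
        · rw [hc]; linarith [hp2, sq_nonneg (ρ - r), hsqη, hp3]
        · rw [hc]; linarith [hp1, hsq, sq_nonneg η, hp3]
      calc |4 * r * (ρ - r) + (ρ - r) ^ 2 - η ^ 2| * r ≤ (4 * r * c) * r :=
            mul_le_mul_of_nonneg_right hnum hr0.le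
        _ = c * (4 * r ^ 2) := by ring
    have hcr : c / r ≤ 1 / 2 := by
      rw [div_le_iff₀ hr0]; linarith
    have hy12 : |y| ≤ 1 / 2 := hyabs.trans hcr
    have hx : |ρ / r - 1| ≤ c / r := by
      have e : ρ / r - 1 = (ρ - r) / r := by field_simp
      rw [e, abs_div, abs_of_pos hr0]
      exact div_le_div_of_nonneg_right (hts.trans hKc) hr0.le
    have hX' : 0 < (ρ + r) ^ 2 - η ^ 2 := by rw [← ha]; exact hX
    have hid := key_id N hN r ρ η hr0 hX'
    have hκX : κ * (a ^ 2 - η ^ 2) ^ p = (ρ / r) * (1 + y) ^ p := by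
      rw [h1y, hκ, hp, ha]
      exact hid
    have hw1 : |(1 + y) ^ p - 1| ≤ A * |y| := hAle y hy12
    have hwb : |(1 + y) ^ p| ≤ 1 + A := by
      have h3 : |(1 + y) ^ p| - |(1:ℝ)| ≤ |(1 + y) ^ p - 1| :=
        abs_sub_abs_le_abs_sub ((1 + y) ^ p) 1
      rw [abs_one] at h3
      have h4 : A * |y| ≤ A * (1 / 2) := mul_le_mul_of_nonneg_left hy12 hA0.le
      linarith [h3, hw1, h4, hA0]
    rw [hκX]
    have e5 : ρ / r * (1 + y) ^ p - 1 = (ρ / r - 1) * (1 + y) ^ p + ((1 + y) ^ p - 1) := by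
      ring
    rw [e5]
    calc |(ρ / r - 1) * (1 + y) ^ p + ((1 + y) ^ p - 1)|
        ≤ |(ρ / r - 1) * (1 + y) ^ p| + |(1 + y) ^ p - 1| := abs_add_le _ _
      _ = |ρ / r - 1| * |(1 + y) ^ p| + |(1 + y) ^ p - 1| := by rw [abs_mul]
      _ ≤ c / r * (1 + A) + A * (c / r) := by
          apply add_le_add
          · exact mul_le_mul hx hwb (abs_nonneg _) (by positivity)
          · refine hw1.trans (mul_le_mul_of_nonneg_left hyabs hA0.le)
      _ = C₁ / r := by rw [hC₁]; field_simp
  -- nonnegativity facts on the domain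
  have hwpos : ∀ η ∈ Set.Ioo b Kstar, 0 ≤ (η ^ 2 - b ^ 2) ^ p ∧ 0 ≤ η := by
    intro η hη
    refine ⟨Real.rpow_nonneg ?_ p, le_trans hb0 hη.1.le⟩
    have h6 : (0:ℝ) ≤ (η - b) * (η + b) :=
      mul_nonneg (by linarith [hη.1]) (by linarith [hη.1, hb0])
    linarith [h6]
  -- integrability of the `Jstar` integrand
  have hcont2 : ContinuousOn (fun η => J η * η * (η ^ 2 - b ^ 2) ^ p) (Set.Ioo b Kstar) := by
    apply ContinuousOn.mul
    · exact (hJc.mul continuous_id).continuousOn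
    · intro η hη
      apply ContinuousAt.continuousWithinAt
      apply ContinuousAt.rpow_const (by fun_prop)
      left
      have h5 := hη.1
      have hη0 : 0 < η := lt_of_le_of_lt hb0 h5
      have h6 : (0:ℝ) < (η - b) * (η + b) :=
        mul_pos (by linarith) (by linarith)
      linarith [h6]
  have hf₂Int : IntegrableOn (fun η => J η * η * (η ^ 2 - b ^ 2) ^ p) (Set.Ioo b Kstar) := by
    apply Integrable.mono' (hwInt.const_mul M)
      (hcont2.aestronglyMeasurable measurableSet_Ioo)
    refine (ae_restrict_iff' measurableSet_Ioo).mpr (ae_of_all _ fun η hη => ?_)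
    obtain ⟨hW, hη0⟩ := hwpos η hη
    rw [Real.norm_eq_abs, abs_mul, abs_mul, abs_of_nonneg hW, abs_of_nonneg hη0]
    calc |J η| * η * (η ^ 2 - b ^ 2) ^ p ≤ M * η * (η ^ 2 - b ^ 2) ^ p := by
          apply mul_le_mul_of_nonneg_right (mul_le_mul_of_nonneg_right (hM η) hη0) hW
      _ = M * (η * (η ^ 2 - b ^ 2) ^ p) := by ring
  -- integrability of the split `Jt` integrand
  have hcont1 : ContinuousOn
      (fun η => κ * (a ^ 2 - η ^ 2) ^ p * ((η ^ 2 - b ^ 2) ^ p * (η * J η)))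
      (Set.Ioo b Kstar) := by
    apply ContinuousOn.mul
    · apply ContinuousOn.mul continuousOn_const
      intro η hη
      apply ContinuousAt.continuousWithinAt
      apply ContinuousAt.rpow_const (by fun_prop)
      left
      have h5 := hη.1
      have h6 := hη.2
      have hη0 : 0 < η := lt_of_le_of_lt hb0 h5
      have h7 : (0:ℝ) < (a - η) * (a + η) :=
        mul_pos (by linarith) (by linarith)
      linarith [h7]
    · apply ContinuousOn.mul
      · intro η hη
        apply ContinuousAt.continuousWithinAt
        apply ContinuousAt.rpow_const (by fun_prop)
        left
        have h5 := hη.1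
        have hη0 : 0 < η := lt_of_le_of_lt hb0 h5
        have h7 : (0:ℝ) < (η - b) * (η + b) :=
          mul_pos (by linarith) (by linarith)
        linarith [h7]
      · exact (continuous_id.mul hJc).continuousOn
  have hC₁r : C₁ / r ≤ C₁ := by
    rw [div_le_iff₀ hr0]
    have h6 : (0:ℝ) ≤ (r - 1) * C₁ := mul_nonneg (by linarith) hC₁0.le
    linarith [h6]
  have hf₁Int : IntegrableOn
      (fun η => κ * (a ^ 2 - η ^ 2) ^ p * ((η ^ 2 - b ^ 2) ^ p * (η * J η)))
      (Set.Ioo b Kstar) := by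
    apply Integrable.mono' (hwInt.const_mul ((1 + C₁) * M))
      (hcont1.aestronglyMeasurable measurableSet_Ioo)
    refine (ae_restrict_iff' measurableSet_Ioo).mpr (ae_of_all _ fun η hη => ?_)
    obtain ⟨hW, hη0⟩ := hwpos η hη
    have hκb : |κ * (a ^ 2 - η ^ 2) ^ p| ≤ 1 + C₁ := by
      have h7 := hkey η hη
      have h9 : |κ * (a ^ 2 - η ^ 2) ^ p| - |(1:ℝ)| ≤ |κ * (a ^ 2 - η ^ 2) ^ p - 1| :=
        abs_sub_abs_le_abs_sub (κ * (a ^ 2 - η ^ 2) ^ p) 1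
      rw [abs_one] at h9
      linarith
    have hnorm : ‖κ * (a ^ 2 - η ^ 2) ^ p * ((η ^ 2 - b ^ 2) ^ p * (η * J η))‖
        = |κ * (a ^ 2 - η ^ 2) ^ p| * ((η ^ 2 - b ^ 2) ^ p * (η * |J η|)) := by
      rw [Real.norm_eq_abs, abs_mul (κ * (a ^ 2 - η ^ 2) ^ p),
        abs_mul ((η ^ 2 - b ^ 2) ^ p), abs_mul η (J η),
        abs_of_nonneg hW, abs_of_nonneg hη0]
    rw [hnorm]
    calc |κ * (a ^ 2 - η ^ 2) ^ p| * ((η ^ 2 - b ^ 2) ^ p * (η * |J η|))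
        ≤ (1 + C₁) * ((η ^ 2 - b ^ 2) ^ p * (η * M)) := by
          apply mul_le_mul hκb ?_ ?_ (by linarith)
          · exact mul_le_mul_of_nonneg_left
              (mul_le_mul_of_nonneg_left (hM η) hη0) hW
          · exact mul_nonneg hW (mul_nonneg hη0 (abs_nonneg _))
      _ = (1 + C₁) * M * (η * (η ^ 2 - b ^ 2) ^ p) := by ring
  -- rewrite the difference as a single integral
  have hdiff : Jt r ρ - Jstar (r - ρ) = ω * ∫ η in Set.Ioo b Kstar,
      (κ * (a ^ 2 - η ^ 2) ^ p - 1) * ((η ^ 2 - b ^ 2) ^ p * (η * J η)) := by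
    rw [hIt, hIs, ← mul_sub]
    congr 1
    rw [← integral_const_mul]
    have esplit : Set.EqOn
        (fun η => κ * (((a ^ 2 - η ^ 2) * (η ^ 2 - b ^ 2)) ^ p * (η * J η)))
        (fun η => κ * (a ^ 2 - η ^ 2) ^ p * ((η ^ 2 - b ^ 2) ^ p * (η * J η)))
        (Set.Ioo b Kstar) := by
      intro η hη
      have h5 := hη.1
      have h6 := hη.2
      have hη0 : 0 < η := lt_of_le_of_lt hb0 h5
      simp only
      have h7 : (0:ℝ) ≤ (a - η) * (a + η) :=
        mul_nonneg (by linarith) (by linarith)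
      have h8 : (0:ℝ) ≤ (η - b) * (η + b) :=
        mul_nonneg (by linarith) (by linarith [hb0])
      rw [Real.mul_rpow (by linarith [h7] : (0:ℝ) ≤ a ^ 2 - η ^ 2)
        (by linarith [h8] : (0:ℝ) ≤ η ^ 2 - b ^ 2)]
      ring
    rw [setIntegral_congr_fun measurableSet_Ioo esplit]
    rw [← integral_sub hf₁Int hf₂Int]
    apply setIntegral_congr_fun measurableSet_Ioo
    intro η hη
    simp only
    ring
  -- final estimate
  rw [hdiff, abs_mul, abs_of_nonneg hω0]
  have hnorm2 : |∫ η in Set.Ioo b Kstar,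
        (κ * (a ^ 2 - η ^ 2) ^ p - 1) * ((η ^ 2 - b ^ 2) ^ p * (η * J η))|
      ≤ ∫ η in Set.Ioo b Kstar, C₁ / r * M * (η * (η ^ 2 - b ^ 2) ^ p) := by
    rw [← Real.norm_eq_abs]
    apply norm_integral_le_of_norm_le (hwInt.const_mul (C₁ / r * M))
    refine (ae_restrict_iff' measurableSet_Ioo).mpr (ae_of_all _ fun η hη => ?_)
    obtain ⟨hW, hη0⟩ := hwpos η hη
    have hnorm : ‖(κ * (a ^ 2 - η ^ 2) ^ p - 1) * ((η ^ 2 - b ^ 2) ^ p * (η * J η))‖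
        = |κ * (a ^ 2 - η ^ 2) ^ p - 1| * ((η ^ 2 - b ^ 2) ^ p * (η * |J η|)) := by
      rw [Real.norm_eq_abs, abs_mul (κ * (a ^ 2 - η ^ 2) ^ p - 1),
        abs_mul ((η ^ 2 - b ^ 2) ^ p), abs_mul η (J η),
        abs_of_nonneg hW, abs_of_nonneg hη0]
    rw [hnorm]
    calc |κ * (a ^ 2 - η ^ 2) ^ p - 1| * ((η ^ 2 - b ^ 2) ^ p * (η * |J η|))
        ≤ (C₁ / r) * ((η ^ 2 - b ^ 2) ^ p * (η * M)) := by
          apply mul_le_mul (hkey η hη) ?_ ?_ (by positivity)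
          · exact mul_le_mul_of_nonneg_left
              (mul_le_mul_of_nonneg_left (hM η) hη0) hW
          · exact mul_nonneg hW (mul_nonneg hη0 (abs_nonneg _))
      _ = C₁ / r * M * (η * (η ^ 2 - b ^ 2) ^ p) := by ring
  have hval2 : ∫ η in Set.Ioo b Kstar, C₁ / r * M * (η * (η ^ 2 - b ^ 2) ^ p)
      = C₁ / r * M * ((Kstar ^ 2 - b ^ 2) ^ (p + 1) / (2 * (p + 1))) := by
    rw [integral_const_mul, hwVal]
  have hmono : (Kstar ^ 2 - b ^ 2) ^ (p + 1) ≤ (Kstar ^ 2) ^ (p + 1) := by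
    have h6 : (0:ℝ) ≤ (Kstar - b) * (Kstar + b) :=
      mul_nonneg (by linarith) (by linarith)
    exact Real.rpow_le_rpow (by linarith [h6]) (by linarith [sq_nonneg b]) hq.le
  calc ω * |∫ η in Set.Ioo b Kstar,
        (κ * (a ^ 2 - η ^ 2) ^ p - 1) * ((η ^ 2 - b ^ 2) ^ p * (η * J η))|
      ≤ ω * (C₁ / r * M * ((Kstar ^ 2 - b ^ 2) ^ (p + 1) / (2 * (p + 1)))) := by
        rw [← hval2]
        exact mul_le_mul_of_nonneg_left hnorm2 hω0
    _ ≤ ω * (C₁ / r * M * ((Kstar ^ 2) ^ (p + 1) / (2 * (p + 1)))) := by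
        have h6 : (Kstar ^ 2 - b ^ 2) ^ (p + 1) / (2 * (p + 1))
            ≤ (Kstar ^ 2) ^ (p + 1) / (2 * (p + 1)) :=
          div_le_div_of_nonneg_right hmono (by linarith [hq])
        have h7 : 0 ≤ C₁ / r * M := mul_nonneg (div_nonneg hC₁0.le hr0.le) hM0.le
        exact mul_le_mul_of_nonneg_left (mul_le_mul_of_nonneg_left h6 h7) hω0
    _ = (C - 1) / r := by
        rw [hCdef, add_sub_cancel_right]
        have h9 : (2 * (p + 1)) ≠ 0 := by positivity
        field_simp
    _ ≤ C / r := div_le_div_of_nonneg_right (by linarith) hr0.le
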